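/- Let k be a field, K:=k×k, and let H be the 8-dimensional k-vector space with basis {λ_{ab}^{cd}, G_{ab}^{cd} : (a,b),(c,d) ∈ {(1,0),(0,1)}}, extended bilinearly in the symbols λ_{ab}^{cd}:=(a,b)⊗1⊗(c,d) and G_{ab}^{cd}:=(a,b)⊗g⊗(c,d) (a,b,c,d∈k), with multiplication λ_{ab}^{cd}λ_{a'b'}^{c'd'}=λ_{aa',bb'}^{cc',dd'}, λ_{ab}^{cd}G_{a'b'}^{c'd'}=G_{aa',bb'}^{dc',cd'}, G_{ab}^{cd}λ_{a'b'}^{c'd'}=G_{ab',ba'}^{cc',dd'}, G_{ab}^{cd}G_{a'b'}^{c'd'}=λ_{ab',ba'}^{dc',cd'}, unit λ_{11}^{11}, comultiplication Δ(λ_{ab}^{cd})=λ_{ab}^{10}⊗λ_{10}^{cd}+λ_{ab}^{01}⊗λ_{01}^{cd} and Δ(G_{ab}^{cd})=G_{ab}^{10}⊗G_{01}^{cd}+G_{ab}^{01}⊗G_{10}^{cd}, counit ε(λ_{ab}^{cd})=ac+bd, ε(G_{ab}^{cd})=ad+bc, and S(λ_{ab}^{cd})=λ_{cd}^{ab}, S(G_{ab}^{cd})=G_{cd}^{ab}.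 Then H is a weak Hopf algebra with bijective antipode S; moreover Π^L(λ_{ab}^{cd})=λ_{ac,bd}^{11}, Π^L(G_{ab}^{cd})=λ_{ad,bc}^{11}, Π^R(λ_{ab}^{cd})=λ_{11}^{ac,bd} and Π^R(G_{ab}^{cd})=λ_{11}^{bc,ad}. -/

import Mathlib

open scoped TensorProduct

/-- The data of a weak Hopf algebra structure on a `k`-vector space `V`:
a multiplication, a unit, a comultiplication `Δ`, a counit `ε` and an
antipode `S`. -/
structure WeakHopfPkg (k V : Type*) [Field k] [AddCommGroup V] [Module k V] where
  mul : V →ₗ[k] V →ₗ[k] V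
  one : V
  Δ : V →ₗ[k] V ⊗[k] V
  ε : V →ₗ[k] k
  S : V →ₗ[k] V

section

variable {k V : Type*} [Field k] [AddCommGroup V] [Module k V]

/-- `Π^L(h) = ε(1⁽¹⁾h)1⁽²⁾`. -/
noncomputable def WeakHopfPkg.piL (P : WeakHopfPkg k V) (h : V) : V :=
  (TensorProduct.lid k V) ((LinearMap.rTensor V (P.ε ∘ₗ P.mul.flip h)) (P.Δ P.one))

/-- `Π^R(h) = 1⁽¹⁾ε(h1⁽²⁾)`. -/
noncomputable def WeakHopfPkg.piR (P : WeakHopfPkg k V) (h : V) : V :=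
  (TensorProduct.rid k V) ((LinearMap.lTensor V (P.ε ∘ₗ P.mul h)) (P.Δ P.one))

/-- The axioms of a weak Hopf algebra with bijective antipode, where Sweedler
sums are expressed via arbitrary finite representations of the comultiplication. -/
structure IsWeakHopfPkg (P : WeakHopfPkg k V) : Prop where
  mul_assoc : ∀ x y z : V, P.mul (P.mul x y) z = P.mul x (P.mul y z)
  one_mul : ∀ x : V, P.mul P.one x = x
  mul_one : ∀ x : V, P.mul x P.one = x
  coassoc : ∀ h : V,
    (TensorProduct.assoc k V V V) ((LinearMap.rTensor V P.Δ) (P.Δ h)) =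
      (LinearMap.lTensor V P.Δ) (P.Δ h)
  counit_left : ∀ h : V, (TensorProduct.lid k V) ((LinearMap.rTensor V P.ε) (P.Δ h)) = h
  counit_right : ∀ h : V, (TensorProduct.rid k V) ((LinearMap.lTensor V P.ε) (P.Δ h)) = h
  comul_mul : ∀ (x y : V) (n₁ : ℕ) (x₁ y₁ : Fin n₁ → V) (n₂ : ℕ) (x₂ y₂ : Fin n₂ → V),
    P.Δ x = ∑ i, x₁ i ⊗ₜ[k] y₁ i → P.Δ y = ∑ j, x₂ j ⊗ₜ[k] y₂ j →
      P.Δ (P.mul x y) = ∑ i, ∑ j, P.mul (x₁ i) (x₂ j) ⊗ₜ[k] P.mul (y₁ i) (y₂ j)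
  weak_comul_one : ∀ (n : ℕ) (x y : Fin n → V) (m : ℕ) (u v : Fin m → V),
    P.Δ P.one = ∑ i, x i ⊗ₜ[k] y i → P.Δ P.one = ∑ j, u j ⊗ₜ[k] v j →
      (LinearMap.lTensor V P.Δ) (P.Δ P.one) =
        ∑ i, ∑ j, x i ⊗ₜ[k] (P.mul (y i) (u j) ⊗ₜ[k] v j) ∧
      (LinearMap.lTensor V P.Δ) (P.Δ P.one) =
        ∑ i, ∑ j, x i ⊗ₜ[k] (P.mul (u j) (y i) ⊗ₜ[k] v j)
  weak_counit : ∀ (h l m : V) (n : ℕ) (x y : Fin n → V),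
    P.Δ l = ∑ i, x i ⊗ₜ[k] y i →
      P.ε (P.mul (P.mul h l) m) = ∑ i, P.ε (P.mul h (x i)) * P.ε (P.mul (y i) m) ∧
      P.ε (P.mul (P.mul h l) m) = ∑ i, P.ε (P.mul h (y i)) * P.ε (P.mul (x i) m)
  antipode_left : ∀ (h : V) (n : ℕ) (x y : Fin n → V),
    P.Δ h = ∑ i, x i ⊗ₜ[k] y i → ∑ i, P.mul (x i) (P.S (y i)) = P.piL h
  antipode_right : ∀ (h : V) (n : ℕ) (x y : Fin n → V),
    P.Δ h = ∑ i, x i ⊗ₜ[k] y i → ∑ i, P.mul (P.S (x i)) (y i) = P.piR h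
  antipode_mid : ∀ (h : V) (n : ℕ) (x y : Fin n → V),
    P.Δ h = ∑ i, x i ⊗ₜ[k] y i →
      ∀ (m : Fin n → ℕ) (u v : (i : Fin n) → Fin (m i) → V),
        (∀ i, P.Δ (y i) = ∑ j, u i j ⊗ₜ[k] v i j) →
          ∑ i, ∑ j, P.mul (P.mul (P.S (x i)) (u i j)) (P.S (v i j)) = P.S h
  S_bijective : Function.Bijective P.S

end

/-- The standard basis vectors of the 8-dimensional space. -/
def bas {k : Type*} [Field k] (t : Bool × Bool × Bool) : (Bool × Bool × Bool) → k :=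
  Pi.single t 1

/-- The element `λ_{ab}^{cd} = (a,b) ⊗ 1 ⊗ (c,d)` of
`H = K ⊗ k[C] ⊗ K`, realized inside the 8-dimensional space
`(Bool × Bool × Bool) → k` (first component `false` for `λ`'s, `true` for
`G`'s; the remaining components index the primitive idempotents `(1,0)`,
`(0,1)` of the two copies of `K = k × k`). -/
def lam {k : Type*} [Field k] (a b c d : k) : (Bool × Bool × Bool) → k :=
  (a * c) • bas (false, false, false) + (a * d) • bas (false, false, true) +
    (b * c) • bas (false, true, false) + (b * d) • bas (false, true, true)

/-- The element `G_{ab}^{cd} = (a,b) ⊗ g ⊗ (c,d)` of `H = K ⊗ k[C] ⊗ K`. -/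
def gee {k : Type*} [Field k] (a b c d : k) : (Bool × Bool × Bool) → k :=
  (a * c) • bas (true, false, false) + (a * d) • bas (true, false, true) +
    (b * c) • bas (true, true, false) + (b * d) • bas (true, true, true)

/-! ### Auxiliary machinery -/

section Aux

variable {k W : Type*} [Field k] [AddCommGroup W] [Module k W]

lemma ext_bas {f g : ((Bool × Bool × Bool) → k) →ₗ[k] W}
    (h : ∀ t, f (bas t) = g (bas t)) : f = g := by
  apply (Pi.basisFun k (Bool × Bool × Bool)).ext
  intro t
  simpa [bas, Pi.basisFun_apply] using h t

lemma bas_cases (t : Bool × Bool × Bool) :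
    (∃ a b c d : k, bas t = lam a b c d) ∨ (∃ a b c d : k, bas t = gee a b c d) := by
  rcases t with ⟨_|_, _|_, _|_⟩
  · exact .inl ⟨1,0,1,0, by simp [lam]⟩
  · exact .inl ⟨1,0,0,1, by simp [lam]⟩
  · exact .inl ⟨0,1,1,0, by simp [lam]⟩
  · exact .inl ⟨0,1,0,1, by simp [lam]⟩
  · exact .inr ⟨1,0,1,0, by simp [gee]⟩
  · exact .inr ⟨1,0,0,1, by simp [gee]⟩
  · exact .inr ⟨0,1,1,0, by simp [gee]⟩
  · exact .inr ⟨0,1,0,1, by simp [gee]⟩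

@[simp] lemma lam_zero_right {a b : k} : lam a b 0 0 = 0 := by simp [lam]
@[simp] lemma lam_zero_left {c d : k} : lam 0 0 c d = 0 := by simp [lam]
@[simp] lemma gee_zero_right {a b : k} : gee a b 0 0 = 0 := by simp [gee]
@[simp] lemma gee_zero_left {c d : k} : gee 0 0 c d = 0 := by simp [gee]

end Aux

section Gadgets

variable {k V : Type*} [Field k] [AddCommGroup V] [Module k V]

/-- Componentwise multiplication on `V ⊗ V`. -/
noncomputable def mulTT (μ : V →ₗ[k] V →ₗ[k] V) :
    V ⊗[k] V →ₗ[k] V ⊗[k] V →ₗ[k] V ⊗[k] V :=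
  TensorProduct.lift (((TensorProduct.mapBilinear (RingHom.id k) V V V V).comp μ).compl₂ μ)

@[simp] lemma mulTT_tmul (μ : V →ₗ[k] V →ₗ[k] V) (x y u v : V) :
    mulTT μ (x ⊗ₜ[k] y) (u ⊗ₜ[k] v) = μ x u ⊗ₜ[k] μ y v := by
  simp [mulTT]

/-- `(x⊗y, u⊗v) ↦ x ⊗ (μ y u ⊗ v)`. -/
noncomputable def psiT (μ : V →ₗ[k] V →ₗ[k] V) :
    V ⊗[k] V →ₗ[k] V ⊗[k] V →ₗ[k] V ⊗[k] (V ⊗[k] V) :=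
  TensorProduct.lift
    (((LinearMap.llcomp k (V ⊗[k] V) (V ⊗[k] V) (V ⊗[k] (V ⊗[k] V))).comp
        (TensorProduct.mk k V (V ⊗[k] V))).compl₂
      (((TensorProduct.mapBilinear (RingHom.id k) V V V V).flip LinearMap.id).comp μ))

@[simp] lemma psiT_tmul (μ : V →ₗ[k] V →ₗ[k] V) (x y u v : V) :
    psiT μ (x ⊗ₜ[k] y) (u ⊗ₜ[k] v) = x ⊗ₜ[k] (μ y u ⊗ₜ[k] v) := by
  simp [psiT]

/-- `(x, u, v) ↦ μ (μ (S x) u) (S v)`. -/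
noncomputable def Tmap (μ : V →ₗ[k] V →ₗ[k] V) (S : V →ₗ[k] V) :
    V →ₗ[k] V →ₗ[k] V →ₗ[k] V :=
  ((μ.compr₂ μ).comp S).compr₂ (LinearMap.lcomp k V S)

@[simp] lemma Tmap_apply (μ : V →ₗ[k] V →ₗ[k] V) (S : V →ₗ[k] V) (x u v : V) :
    Tmap μ S x u v = μ (μ (S x) u) (S v) := by
  simp [Tmap]

noncomputable def midT (μ : V →ₗ[k] V →ₗ[k] V) (S : V →ₗ[k] V) (Δ : V →ₗ[k] V ⊗[k] V) :
    V ⊗[k] V →ₗ[k] V :=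
  TensorProduct.lift
    ((((TensorProduct.lift.equiv (RingHom.id k) V V V).toLinearMap).comp (Tmap μ S)).compl₂ Δ)

@[simp] lemma midT_tmul (μ : V →ₗ[k] V →ₗ[k] V) (S : V →ₗ[k] V) (Δ : V →ₗ[k] V ⊗[k] V)
    (x y : V) :
    midT μ S Δ (x ⊗ₜ[k] y) = TensorProduct.lift (Tmap μ S x) (Δ y) := by
  have he : ∀ g : V →ₗ[k] V →ₗ[k] V, TensorProduct.lift.equiv (RingHom.id k) V V V g = TensorProduct.lift g :=
    fun g => TensorProduct.ext' (by simp)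
  simp [midT, he]

/-- `(h, m, l) ↦ ε (μ (μ h l) m)`. -/
noncomputable def wcL (μ : V →ₗ[k] V →ₗ[k] V) (ε : V →ₗ[k] k) :
    V →ₗ[k] V →ₗ[k] V →ₗ[k] k :=
  LinearMap.lflip.toLinearMap ∘ₗ ((μ.compr₂ μ).compr₂ (LinearMap.llcomp k V V k ε))

@[simp] lemma wcL_apply (μ : V →ₗ[k] V →ₗ[k] V) (ε : V →ₗ[k] k) (h m l : V) :
    wcL μ ε h m l = ε (μ (μ h l) m) := by simp [wcL]

/-- `(m, h, l) ↦ ε (μ (μ h l) m)`. -/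
noncomputable def wcL' (μ : V →ₗ[k] V →ₗ[k] V) (ε : V →ₗ[k] k) :
    V →ₗ[k] V →ₗ[k] V →ₗ[k] k :=
  (wcL μ ε).flip

@[simp] lemma wcL'_apply (μ : V →ₗ[k] V →ₗ[k] V) (ε : V →ₗ[k] k) (m h l : V) :
    wcL' μ ε m h l = ε (μ (μ h l) m) := by simp [wcL']

/-- `(h, m, l) ↦ lid (map (ε∘μ h) (ε∘μ.flip m) (Δ l))`. -/
noncomputable def wcR (μ : V →ₗ[k] V →ₗ[k] V) (ε : V →ₗ[k] k) (Δ : V →ₗ[k] V ⊗[k] V) :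
    V →ₗ[k] V →ₗ[k] V →ₗ[k] k :=
  ((((TensorProduct.mapBilinear (RingHom.id k) V V k k).comp
      ((LinearMap.llcomp k V V k ε).comp μ)).compl₂
    ((LinearMap.llcomp k V V k ε).comp μ.flip)).compr₂
    ((LinearMap.llcomp k V (k ⊗[k] k) k (TensorProduct.lid k k).toLinearMap).comp
      (LinearMap.lcomp k (k ⊗[k] k) Δ)))

@[simp] lemma wcR_apply (μ : V →ₗ[k] V →ₗ[k] V) (ε : V →ₗ[k] k) (Δ : V →ₗ[k] V ⊗[k] V)
    (h m l : V) :
    wcR μ ε Δ h m l =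
      (TensorProduct.lid k k) (TensorProduct.map (ε ∘ₗ μ h) (ε ∘ₗ μ.flip m) (Δ l)) := by
  simp [wcR]; rfl

/-- `(m, h, l) ↦ lid (map (ε∘μ.flip m) (ε∘μ h) (Δ l))`. -/
noncomputable def wcR' (μ : V →ₗ[k] V →ₗ[k] V) (ε : V →ₗ[k] k) (Δ : V →ₗ[k] V ⊗[k] V) :
    V →ₗ[k] V →ₗ[k] V →ₗ[k] k :=
  ((((TensorProduct.mapBilinear (RingHom.id k) V V k k).comp
      ((LinearMap.llcomp k V V k ε).comp μ.flip)).compl₂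
    ((LinearMap.llcomp k V V k ε).comp μ)).compr₂
    ((LinearMap.llcomp k V (k ⊗[k] k) k (TensorProduct.lid k k).toLinearMap).comp
      (LinearMap.lcomp k (k ⊗[k] k) Δ)))

@[simp] lemma wcR'_apply (μ : V →ₗ[k] V →ₗ[k] V) (ε : V →ₗ[k] k) (Δ : V →ₗ[k] V ⊗[k] V)
    (m h l : V) :
    wcR' μ ε Δ m h l =
      (TensorProduct.lid k k) (TensorProduct.map (ε ∘ₗ μ.flip m) (ε ∘ₗ μ h) (Δ l)) := by
  simp [wcR']; rfl

end Gadgets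

set_option maxHeartbeats 1600000

/-- the 8-dimensional space `H = K ⊗ k[C] ⊗ K` spanned by the
`λ_{ab}^{cd}` and `G_{ab}^{cd}`, with the indicated multiplication, unit,
comultiplication, counit and antipode, is a weak Hopf algebra with bijective
antipode, and `Π^L`, `Π^R` are given by the indicated formulas. -/
theorem statement19 {k : Type*} [Field k] (P : WeakHopfPkg k ((Bool × Bool × Bool) → k))
    (hll : ∀ a b c d a' b' c' d' : k,
      P.mul (lam a b c d) (lam a' b' c' d') = lam (a * a') (b * b') (c * c') (d * d'))
    (hlg : ∀ a b c d a' b' c' d' : k,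
      P.mul (lam a b c d) (gee a' b' c' d') = gee (a * a') (b * b') (d * c') (c * d'))
    (hgl : ∀ a b c d a' b' c' d' : k,
      P.mul (gee a b c d) (lam a' b' c' d') = gee (a * b') (b * a') (c * c') (d * d'))
    (hgg : ∀ a b c d a' b' c' d' : k,
      P.mul (gee a b c d) (gee a' b' c' d') = lam (a * b') (b * a') (d * c') (c * d'))
    (hone : P.one = lam 1 1 1 1)
    (hΔl : ∀ a b c d : k,
      P.Δ (lam a b c d) = lam a b 1 0 ⊗ₜ[k] lam 1 0 c d + lam a b 0 1 ⊗ₜ[k] lam 0 1 c d)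
    (hΔg : ∀ a b c d : k,
      P.Δ (gee a b c d) = gee a b 1 0 ⊗ₜ[k] gee 0 1 c d + gee a b 0 1 ⊗ₜ[k] gee 1 0 c d)
    (hεl : ∀ a b c d : k, P.ε (lam a b c d) = a * c + b * d)
    (hεg : ∀ a b c d : k, P.ε (gee a b c d) = a * d + b * c)
    (hSl : ∀ a b c d : k, P.S (lam a b c d) = lam c d a b)
    (hSg : ∀ a b c d : k, P.S (gee a b c d) = gee c d a b) :
    IsWeakHopfPkg P ∧
      (∀ a b c d : k, P.piL (lam a b c d) = lam (a * c) (b * d) 1 1) ∧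
      (∀ a b c d : k, P.piL (gee a b c d) = lam (a * d) (b * c) 1 1) ∧
      (∀ a b c d : k, P.piR (lam a b c d) = lam 1 1 (a * c) (b * d)) ∧
      (∀ a b c d : k, P.piR (gee a b c d) = lam 1 1 (b * c) (a * d)) := by
  -- associativity
  have hassoc : ∀ x y z, P.mul (P.mul x y) z = P.mul x (P.mul y z) := by
    have E : P.mul.compr₂ P.mul
        = ((LinearMap.llcomp k ((Bool × Bool × Bool) → k) _ _).comp P.mul).compl₂ P.mul := by
      apply ext_bas (W := ((Bool × Bool × Bool) → k) →ₗ[k] ((Bool × Bool × Bool) → k) →ₗ[k] ((Bool × Bool × Bool) → k)); intro t1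
      apply ext_bas (W := ((Bool × Bool × Bool) → k) →ₗ[k] ((Bool × Bool × Bool) → k)); intro t2
      apply ext_bas (W := ((Bool × Bool × Bool) → k)); intro t3
      simp only [LinearMap.compr₂_apply, LinearMap.compl₂_apply, LinearMap.comp_apply,
        LinearMap.llcomp_apply]
      rcases bas_cases (k := k) t1 with ⟨a,b,c,d,h1⟩|⟨a,b,c,d,h1⟩ <;>
      rcases bas_cases (k := k) t2 with ⟨a',b',c',d',h2⟩|⟨a',b',c',d',h2⟩ <;>
      rcases bas_cases (k := k) t3 with ⟨a'',b'',c'',d'',h3⟩|⟨a'',b'',c'',d'',h3⟩ <;>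
        rw [h1, h2, h3] <;>
        simp only [hll, hlg, hgl, hgg] <;>
        (simp only [lam, gee]; module)
    intro x y z
    have h1 := LinearMap.congr_fun (LinearMap.congr_fun E x) y
    simpa only [LinearMap.compr₂_apply, LinearMap.compl₂_apply, LinearMap.comp_apply,
      LinearMap.llcomp_apply] using LinearMap.congr_fun h1 z
  -- unit
  have honemul : ∀ x, P.mul P.one x = x := by
    have E : P.mul P.one = LinearMap.id := by
      rw [hone]; apply ext_bas (W := ((Bool × Bool × Bool) → k)); intro t
      rcases bas_cases (k := k) t with ⟨a,b,c,d,ht⟩|⟨a,b,c,d,ht⟩ <;> rw [ht] <;>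
        simp only [LinearMap.id_apply, hll, hlg, one_mul]
    intro x; simpa using LinearMap.congr_fun E x
  have hmulone : ∀ x, P.mul x P.one = x := by
    have E : P.mul.flip P.one = LinearMap.id := by
      rw [hone]; apply ext_bas (W := ((Bool × Bool × Bool) → k)); intro t
      rcases bas_cases (k := k) t with ⟨a,b,c,d,ht⟩|⟨a,b,c,d,ht⟩ <;> rw [ht] <;>
        simp only [LinearMap.flip_apply, LinearMap.id_apply, hll, hgl, mul_one]
    intro x; simpa using LinearMap.congr_fun E x
  -- coassociativity
  have hcoassoc : ∀ h, (TensorProduct.assoc k _ _ _) ((LinearMap.rTensor _ P.Δ) (P.Δ h))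
      = (LinearMap.lTensor _ P.Δ) (P.Δ h) := by
    have E : (TensorProduct.assoc k _ _ _).toLinearMap ∘ₗ (LinearMap.rTensor _ P.Δ) ∘ₗ P.Δ
        = (LinearMap.lTensor ((Bool × Bool × Bool) → k) P.Δ) ∘ₗ P.Δ := by
      apply ext_bas (W := ((Bool × Bool × Bool) → k) ⊗[k] (((Bool × Bool × Bool) → k) ⊗[k] ((Bool × Bool × Bool) → k))); intro t
      rcases bas_cases (k := k) t with ⟨a,b,c,d,ht⟩|⟨a,b,c,d,ht⟩ <;> rw [ht] <;>
        simp only [LinearMap.comp_apply, LinearEquiv.coe_coe, hΔl, hΔg, map_add,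
          LinearMap.rTensor_tmul, LinearMap.lTensor_tmul, TensorProduct.assoc_tmul,
          TensorProduct.add_tmul, TensorProduct.tmul_add] <;>
        abel
    intro h
    simpa only [LinearMap.comp_apply, LinearEquiv.coe_coe] using LinearMap.congr_fun E h
  -- counit
  have hcl : ∀ h, (TensorProduct.lid k _) ((LinearMap.rTensor _ P.ε) (P.Δ h)) = h := by
    have E : (TensorProduct.lid k _).toLinearMap ∘ₗ (LinearMap.rTensor _ P.ε) ∘ₗ P.Δ
        = (LinearMap.id : ((Bool × Bool × Bool) → k) →ₗ[k] _) := by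
      apply ext_bas (W := ((Bool × Bool × Bool) → k)); intro t
      rcases bas_cases (k := k) t with ⟨a,b,c,d,ht⟩|⟨a,b,c,d,ht⟩ <;> rw [ht] <;>
        simp only [LinearMap.comp_apply, LinearEquiv.coe_coe, hΔl, hΔg, map_add,
          LinearMap.rTensor_tmul, TensorProduct.lid_tmul, hεl, hεg, LinearMap.id_apply] <;>
        (simp only [lam, gee]; module)
    intro h
    simpa only [LinearMap.comp_apply, LinearEquiv.coe_coe, LinearMap.id_apply] using LinearMap.congr_fun E h
  have hcr : ∀ h, (TensorProduct.rid k _) ((LinearMap.lTensor _ P.ε) (P.Δ h)) = h := by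
    have E : (TensorProduct.rid k _).toLinearMap ∘ₗ (LinearMap.lTensor _ P.ε) ∘ₗ P.Δ
        = (LinearMap.id : ((Bool × Bool × Bool) → k) →ₗ[k] _) := by
      apply ext_bas (W := ((Bool × Bool × Bool) → k)); intro t
      rcases bas_cases (k := k) t with ⟨a,b,c,d,ht⟩|⟨a,b,c,d,ht⟩ <;> rw [ht] <;>
        simp only [LinearMap.comp_apply, LinearEquiv.coe_coe, hΔl, hΔg, map_add,
          LinearMap.lTensor_tmul, TensorProduct.rid_tmul, hεl, hεg, LinearMap.id_apply] <;>
        (simp only [lam, gee]; module)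
    intro h
    simpa only [LinearMap.comp_apply, LinearEquiv.coe_coe, LinearMap.id_apply] using LinearMap.congr_fun E h
  -- comultiplicativity
  have hcm : ∀ x y, P.Δ (P.mul x y) = mulTT P.mul (P.Δ x) (P.Δ y) := by
    have E : P.mul.compr₂ P.Δ = ((mulTT P.mul).comp P.Δ).compl₂ P.Δ := by
      apply ext_bas (W := ((Bool × Bool × Bool) → k) →ₗ[k] (((Bool × Bool × Bool) → k) ⊗[k] ((Bool × Bool × Bool) → k))); intro t1
      apply ext_bas (W := ((Bool × Bool × Bool) → k) ⊗[k] ((Bool × Bool × Bool) → k)); intro t2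
      simp only [LinearMap.compr₂_apply, LinearMap.compl₂_apply, LinearMap.comp_apply]
      rcases bas_cases (k := k) t1 with ⟨a,b,c,d,h1⟩|⟨a,b,c,d,h1⟩ <;>
      rcases bas_cases (k := k) t2 with ⟨a',b',c',d',h2⟩|⟨a',b',c',d',h2⟩ <;>
        rw [h1, h2] <;>
        simp only [hll, hlg, hgl, hgg, hΔl, hΔg, map_add, LinearMap.add_apply, mulTT_tmul,
          one_mul, mul_one, zero_mul, mul_zero, lam_zero_left, lam_zero_right,
          gee_zero_left, gee_zero_right, TensorProduct.zero_tmul, TensorProduct.tmul_zero,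
          add_zero, zero_add] <;>
        abel
    intro x y
    have h1 := LinearMap.congr_fun (LinearMap.congr_fun E x) y
    simpa only [LinearMap.compr₂_apply, LinearMap.compl₂_apply, LinearMap.comp_apply] using h1
  -- weak comultiplication of the unit
  have hΨ1 : (LinearMap.lTensor _ P.Δ) (P.Δ P.one) = psiT P.mul (P.Δ P.one) (P.Δ P.one) := by
    simp only [hone, hΔl, map_add, LinearMap.add_apply, LinearMap.lTensor_tmul, psiT_tmul,
      hll, TensorProduct.tmul_add, one_mul, mul_one, zero_mul, mul_zero] <;> abel
  have hΨ2 : (LinearMap.lTensor _ P.Δ) (P.Δ P.one) = psiT P.mul.flip (P.Δ P.one) (P.Δ P.one) := by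
    simp only [hone, hΔl, map_add, LinearMap.add_apply, LinearMap.lTensor_tmul, psiT_tmul,
      LinearMap.flip_apply, hll, TensorProduct.tmul_add, one_mul, mul_one, zero_mul,
      mul_zero] <;> abel
  -- weak counit
  have hwc1 : wcL P.mul P.ε = wcR P.mul P.ε P.Δ := by
    apply ext_bas (W := ((Bool × Bool × Bool) → k) →ₗ[k] ((Bool × Bool × Bool) → k) →ₗ[k] k); intro t1
    apply ext_bas (W := ((Bool × Bool × Bool) → k) →ₗ[k] k); intro t2
    apply ext_bas (W := k); intro t3
    rcases bas_cases (k := k) t1 with ⟨a,b,c,d,h1⟩|⟨a,b,c,d,h1⟩ <;>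
    rcases bas_cases (k := k) t2 with ⟨a',b',c',d',h2⟩|⟨a',b',c',d',h2⟩ <;>
    rcases bas_cases (k := k) t3 with ⟨a'',b'',c'',d'',h3⟩|⟨a'',b'',c'',d'',h3⟩ <;>
      rw [h1, h2, h3] <;>
      simp only [wcL_apply, wcR_apply, hΔl, hΔg, map_add, TensorProduct.map_tmul,
        TensorProduct.lid_tmul, LinearMap.comp_apply, LinearMap.flip_apply,
        hll, hlg, hgl, hgg, hεl, hεg, smul_eq_mul] <;>
      ring
  have hwc2 : wcL' P.mul P.ε = wcR' P.mul P.ε P.Δ := by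
    apply ext_bas (W := ((Bool × Bool × Bool) → k) →ₗ[k] ((Bool × Bool × Bool) → k) →ₗ[k] k); intro t1
    apply ext_bas (W := ((Bool × Bool × Bool) → k) →ₗ[k] k); intro t2
    apply ext_bas (W := k); intro t3
    rcases bas_cases (k := k) t1 with ⟨a,b,c,d,h1⟩|⟨a,b,c,d,h1⟩ <;>
    rcases bas_cases (k := k) t2 with ⟨a',b',c',d',h2⟩|⟨a',b',c',d',h2⟩ <;>
    rcases bas_cases (k := k) t3 with ⟨a'',b'',c'',d'',h3⟩|⟨a'',b'',c'',d'',h3⟩ <;>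
      rw [h1, h2, h3] <;>
      simp only [wcL'_apply, wcR'_apply, hΔl, hΔg, map_add, TensorProduct.map_tmul,
        TensorProduct.lid_tmul, LinearMap.comp_apply, LinearMap.flip_apply,
        hll, hlg, hgl, hgg, hεl, hεg, smul_eq_mul] <;>
      ring
  -- Π^L and Π^R
  have piL_eq : ∀ h, P.piL h
      = P.ε (P.mul (lam 1 1 1 0) h) • lam 1 0 1 1 + P.ε (P.mul (lam 1 1 0 1) h) • lam 0 1 1 1 := by
    intro h
    simp only [WeakHopfPkg.piL, hone, hΔl, map_add, LinearMap.rTensor_tmul,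
      TensorProduct.lid_tmul, LinearMap.comp_apply, LinearMap.flip_apply]
  have piR_eq : ∀ h, P.piR h
      = P.ε (P.mul h (lam 1 0 1 1)) • lam 1 1 1 0 + P.ε (P.mul h (lam 0 1 1 1)) • lam 1 1 0 1 := by
    intro h
    simp only [WeakHopfPkg.piR, hone, hΔl, map_add, LinearMap.lTensor_tmul,
      TensorProduct.rid_tmul, LinearMap.comp_apply]
  have piL_lam : ∀ a b c d : k, P.piL (lam a b c d) = lam (a * c) (b * d) 1 1 := by
    intro a b c d; rw [piL_eq]
    simp only [hll, hεl]
    simp only [lam]; module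
  have piL_gee : ∀ a b c d : k, P.piL (gee a b c d) = lam (a * d) (b * c) 1 1 := by
    intro a b c d; rw [piL_eq]
    simp only [hlg, hεg]
    simp only [lam]; module
  have piR_lam : ∀ a b c d : k, P.piR (lam a b c d) = lam 1 1 (a * c) (b * d) := by
    intro a b c d; rw [piR_eq]
    simp only [hll, hεl]
    simp only [lam]; module
  have piR_gee : ∀ a b c d : k, P.piR (gee a b c d) = lam 1 1 (b * c) (a * d) := by
    intro a b c d; rw [piR_eq]
    simp only [hgl, hεg]
    simp only [lam]; module
  -- antipode axioms (linear-map form)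
  have hAL : ∀ h, TensorProduct.lift (P.mul.compl₂ P.S) (P.Δ h) = P.piL h := by
    have E : TensorProduct.lift (P.mul.compl₂ P.S) ∘ₗ P.Δ
        = (LinearMap.toSpanSingleton k _ (lam 1 0 1 1)) ∘ₗ (P.ε ∘ₗ P.mul (lam 1 1 1 0))
          + (LinearMap.toSpanSingleton k _ (lam 0 1 1 1)) ∘ₗ (P.ε ∘ₗ P.mul (lam 1 1 0 1)) := by
      apply ext_bas (W := ((Bool × Bool × Bool) → k)); intro t
      rcases bas_cases (k := k) t with ⟨a,b,c,d,ht⟩|⟨a,b,c,d,ht⟩ <;> rw [ht] <;>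
        simp only [LinearMap.comp_apply, LinearMap.add_apply, hΔl, hΔg, map_add,
          TensorProduct.lift.tmul, LinearMap.compl₂_apply, hSl, hSg, hll, hlg, hgl, hgg,
          hεl, hεg, LinearMap.toSpanSingleton_apply] <;>
        (simp only [lam, gee]; module)
    intro h
    rw [piL_eq h]
    simpa only [LinearMap.comp_apply, LinearMap.add_apply,
      LinearMap.toSpanSingleton_apply] using LinearMap.congr_fun E h
  have hAR : ∀ h, TensorProduct.lift (P.mul.comp P.S) (P.Δ h) = P.piR h := by
    have E : TensorProduct.lift (P.mul.comp P.S) ∘ₗ P.Δ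
        = (LinearMap.toSpanSingleton k _ (lam 1 1 1 0)) ∘ₗ (P.ε ∘ₗ P.mul.flip (lam 1 0 1 1))
          + (LinearMap.toSpanSingleton k _ (lam 1 1 0 1)) ∘ₗ (P.ε ∘ₗ P.mul.flip (lam 0 1 1 1)) := by
      apply ext_bas (W := ((Bool × Bool × Bool) → k)); intro t
      rcases bas_cases (k := k) t with ⟨a,b,c,d,ht⟩|⟨a,b,c,d,ht⟩ <;> rw [ht] <;>
        simp only [LinearMap.comp_apply, LinearMap.add_apply, LinearMap.flip_apply, hΔl, hΔg,
          map_add, TensorProduct.lift.tmul, hSl, hSg, hll, hlg, hgl, hgg,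
          hεl, hεg, LinearMap.toSpanSingleton_apply] <;>
        (simp only [lam, gee]; module)
    intro h
    rw [piR_eq h]
    simpa only [LinearMap.comp_apply, LinearMap.add_apply, LinearMap.flip_apply,
      LinearMap.toSpanSingleton_apply] using LinearMap.congr_fun E h
  have hMid : ∀ h, midT P.mul P.S P.Δ (P.Δ h) = P.S h := by
    have E : midT P.mul P.S P.Δ ∘ₗ P.Δ = P.S := by
      apply ext_bas (W := ((Bool × Bool × Bool) → k)); intro t
      rcases bas_cases (k := k) t with ⟨a,b,c,d,ht⟩|⟨a,b,c,d,ht⟩ <;> rw [ht] <;>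
        simp only [LinearMap.comp_apply, hΔl, hΔg, map_add, midT_tmul, LinearMap.add_apply,
          TensorProduct.lift.tmul, Tmap_apply, hSl, hSg, hll, hlg, hgl, hgg] <;>
        (simp only [lam, gee]; module)
    intro h
    simpa only [LinearMap.comp_apply] using LinearMap.congr_fun E h
  -- bijectivity of S
  have hSS : ∀ x, P.S (P.S x) = x := by
    have E : P.S ∘ₗ P.S = LinearMap.id := by
      apply ext_bas (W := ((Bool × Bool × Bool) → k)); intro t
      rcases bas_cases (k := k) t with ⟨a,b,c,d,ht⟩|⟨a,b,c,d,ht⟩ <;> rw [ht] <;>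
        simp only [LinearMap.comp_apply, LinearMap.id_apply, hSl, hSg]
    intro x
    simpa only [LinearMap.comp_apply, LinearMap.id_apply] using LinearMap.congr_fun E x
  refine ⟨⟨hassoc, honemul, hmulone, hcoassoc, hcl, hcr, ?_, ?_, ?_, ?_, ?_, ?_, ?_⟩,
    piL_lam, piL_gee, piR_lam, piR_gee⟩
  · -- comul_mul
    intro x y n₁ x₁ y₁ n₂ x₂ y₂ h1 h2
    have e : ∑ i, ∑ j, P.mul (x₁ i) (x₂ j) ⊗ₜ[k] P.mul (y₁ i) (y₂ j)
        = mulTT P.mul (∑ i, x₁ i ⊗ₜ[k] y₁ i) (∑ j, x₂ j ⊗ₜ[k] y₂ j) := by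
      simp only [map_sum, LinearMap.sum_apply, mulTT_tmul]
      rw [Finset.sum_comm]
    rw [e, ← h1, ← h2]
    exact hcm x y
  · -- weak_comul_one
    intro n x y m u v h1 h2
    constructor
    · have e : ∑ i, ∑ j, x i ⊗ₜ[k] (P.mul (y i) (u j) ⊗ₜ[k] v j)
          = psiT P.mul (∑ i, x i ⊗ₜ[k] y i) (∑ j, u j ⊗ₜ[k] v j) := by
        simp only [map_sum, LinearMap.sum_apply, psiT_tmul]
        rw [Finset.sum_comm]
      rw [e, ← h1, ← h2]
      exact hΨ1
    · have e : ∑ i, ∑ j, x i ⊗ₜ[k] (P.mul (u j) (y i) ⊗ₜ[k] v j)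
          = psiT P.mul.flip (∑ i, x i ⊗ₜ[k] y i) (∑ j, u j ⊗ₜ[k] v j) := by
        simp only [map_sum, LinearMap.sum_apply, psiT_tmul, LinearMap.flip_apply]
        rw [Finset.sum_comm]
      rw [e, ← h1, ← h2]
      exact hΨ2
  · -- weak_counit
    intro h l m n x y hrep
    constructor
    · have e : ∑ i, P.ε (P.mul h (x i)) * P.ε (P.mul (y i) m)
          = (TensorProduct.lid k k)
              (TensorProduct.map (P.ε ∘ₗ P.mul h) (P.ε ∘ₗ P.mul.flip m) (P.Δ l)) := by
        rw [hrep]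
        simp only [map_sum, TensorProduct.map_tmul, TensorProduct.lid_tmul, smul_eq_mul,
          LinearMap.comp_apply, LinearMap.flip_apply]
      rw [e]
      simpa only [wcL_apply, wcR_apply] using
        LinearMap.congr_fun (LinearMap.congr_fun (LinearMap.congr_fun hwc1 h) m) l
    · have e : ∑ i, P.ε (P.mul h (y i)) * P.ε (P.mul (x i) m)
          = (TensorProduct.lid k k)
              (TensorProduct.map (P.ε ∘ₗ P.mul.flip m) (P.ε ∘ₗ P.mul h) (P.Δ l)) := by
        rw [hrep]
        simp only [map_sum, TensorProduct.map_tmul, TensorProduct.lid_tmul, smul_eq_mul,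
          LinearMap.comp_apply, LinearMap.flip_apply]
        exact Finset.sum_congr rfl fun i _ => mul_comm _ _
      rw [e]
      simpa only [wcL'_apply, wcR'_apply] using
        LinearMap.congr_fun (LinearMap.congr_fun (LinearMap.congr_fun hwc2 m) h) l
  · -- antipode_left
    intro h n x y hrep
    have e : ∑ i, P.mul (x i) (P.S (y i))
        = TensorProduct.lift (P.mul.compl₂ P.S) (P.Δ h) := by
      rw [hrep]
      simp only [map_sum, TensorProduct.lift.tmul, LinearMap.compl₂_apply]
    rw [e]
    exact hAL h
  · -- antipode_right
    intro h n x y hrep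
    have e : ∑ i, P.mul (P.S (x i)) (y i)
        = TensorProduct.lift (P.mul.comp P.S) (P.Δ h) := by
      rw [hrep]
      simp only [map_sum, TensorProduct.lift.tmul, LinearMap.comp_apply]
    rw [e]
    exact hAR h
  · -- antipode_mid
    intro h n x y hrep m u v hu
    have e1 : ∀ i, ∑ j, P.mul (P.mul (P.S (x i)) (u i j)) (P.S (v i j))
        = TensorProduct.lift (Tmap P.mul P.S (x i)) (P.Δ (y i)) := by
      intro i
      rw [hu i]
      simp only [map_sum, TensorProduct.lift.tmul, Tmap_apply]
    calc ∑ i, ∑ j, P.mul (P.mul (P.S (x i)) (u i j)) (P.S (v i j))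
        = ∑ i, TensorProduct.lift (Tmap P.mul P.S (x i)) (P.Δ (y i)) :=
          Finset.sum_congr rfl fun i _ => e1 i
      _ = ∑ i, midT P.mul P.S P.Δ (x i ⊗ₜ[k] y i) := by simp only [midT_tmul]
      _ = midT P.mul P.S P.Δ (∑ i, x i ⊗ₜ[k] y i) := (map_sum _ _ _).symm
      _ = midT P.mul P.S P.Δ (P.Δ h) := by rw [hrep]
      _ = P.S h := hMid h
  · -- S bijective
    exact Function.Involutive.bijective hSS
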